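/- For every ℓ > 0: 3·sinh²(ℓ)·cosh(ℓ)/tanh²(ℓ/2) − 6·sinh³(ℓ)/tanh(ℓ/2) + 9·(2/3 + (1/3)·sinh²(ℓ)·cosh(ℓ) − (2/3)·cosh(ℓ)) = 12. -/

import Mathlib

open Real

/-- Consistency identity for the dual variables in the case `κ = −1`, `n = 4`. -/
theorem hyp_consistency (ℓ : ℝ) (hℓ : 0 < ℓ) :
    3 * (sinh ℓ) ^ 2 * cosh ℓ / (tanh (ℓ / 2)) ^ 2 - 6 * (sinh ℓ) ^ 3 / tanh (ℓ / 2)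
      + 9 * (2 / 3 + (1 / 3) * (sinh ℓ) ^ 2 * cosh ℓ - (2 / 3) * cosh ℓ) = 12 := by
  have hx : ℓ = 2 * (ℓ / 2) := by ring
  set x := ℓ / 2 with hxdef
  have hxpos : 0 < x := by positivity
  have hs : sinh x ≠ 0 := ne_of_gt (by positivity)
  have hc : cosh x ≠ 0 := ne_of_gt (cosh_pos x)
  have hsq : cosh x ^ 2 = sinh x ^ 2 + 1 := cosh_sq x
  rw [hx, Real.sinh_two_mul, Real.cosh_two_mul, Real.tanh_eq_sinh_div_cosh]
  field_simp
  linear_combination (36 * cosh x ^ 4 + (36 - 36 * sinh x ^ 2) * cosh x ^ 2 + 18) * hsq
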